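/- (Commutativity of Reductions) Let G ∈ 𝔾_π and suppose the sequences S₁,…,S_m and T₁,…,T_n both induce a sequence of reductions on G. If S_m = T_n then R(G;S₁,…,S_m) = R(G;T₁,…,T_n). -/

import Mathlib

open scoped Classical

noncomputable section

/-- A finite weighted digraph with weights in the field `𝕎 = RatFunc ℂ` of complex
rational functions: a finite vertex set together with a weight function, where
weight `0` encodes the absence of an edge (no parallel edges, loops allowed). -/
structure WDigraph (V : Type*) [Fintype V] [DecidableEq V] where
  verts : Finset V
  w : V → V → RatFunc ℂ

namespace WDigraph

variable {V : Type*} [Fintype V] [DecidableEq V]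

/-- Membership in `𝔾`: all edges (nonzero weights) join vertices of `G`. -/
def Wf (G : WDigraph V) : Prop :=
  ∀ u v, G.w u v ≠ 0 → u ∈ G.verts ∧ v ∈ G.verts

/-- `det (M(G) - λ I)` as an element of `𝕎`. -/
def charDet (G : WDigraph V) : RatFunc ℂ :=
  Matrix.det (Matrix.of fun i j : G.verts =>
    G.w i.1 j.1 - if i = j then (RatFunc.X : RatFunc ℂ) else 0)

/-- The spectrum of `G`: the list (multiset) of complex solutions, with
multiplicity, of `det (M(G,λ) - λ I) = 0`. -/
def spec (G : WDigraph V) : Multiset ℂ := G.charDet.num.roots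

/-- Membership in `𝔾_π`: every adjacency matrix entry `p/q` has `π(p/q) = deg p - deg q ≤ 0`. -/
def PiNonpos (G : WDigraph V) : Prop :=
  ∀ u v, (G.w u v).num.degree ≤ (G.w u v).denom.degree

end WDigraph

/-- Two spectra (lists) differ at most by the set `N`: after removing all entries
with values in `N` they agree. -/
def SpecDiffAtMost (s₁ s₂ : Multiset ℂ) (N : Set ℂ) : Prop :=
  s₁.filter (fun z => z ∉ N) = s₂.filter (fun z => z ∉ N)

variable {V : Type*} [Fintype V] [DecidableEq V]

/-- `S` is a structural set of `G`: `S` is a nonempty subset of the vertices, the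
complement of `S` induces no cycles in `ℓ(G)` (i.e. no closed walk through
consecutive-distinct vertices all lying outside `S`), and no loop at a vertex
outside `S` has weight `λ`. -/
def IsStructuralSet (G : WDigraph V) (S : Finset V) : Prop :=
  S.Nonempty ∧ S ⊆ G.verts ∧
    (∀ v, ¬ Relation.TransGen
      (fun a b => a ∈ G.verts ∧ b ∈ G.verts ∧ a ∉ S ∧ b ∉ S ∧ a ≠ b ∧ G.w a b ≠ 0) v v) ∧
    ∀ v ∈ G.verts, v ∉ S → G.w v v ≠ RatFunc.X

/-- `β` is a branch of `G` from `u` to `v` with respect to `S`: a path or cycle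
from `u` to `v` in `G` all of whose interior vertices lie outside `S`. -/
def IsBranch (G : WDigraph V) (S : Finset V) (u v : V) (β : List V) : Prop :=
  u ∈ S ∧ v ∈ S ∧
    ∃ int : List V, β = u :: (int ++ [v]) ∧
      (∀ x ∈ int, x ∈ G.verts ∧ x ∉ S) ∧
      (u :: int).Nodup ∧ v ∉ int ∧
      List.Chain' (fun a b => G.w a b ≠ 0) β

/-- The branch product `𝒫_ω(β)` of a branch `β = v₁, …, v_m`. -/
def branchProd {V : Type*} (w : V → V → RatFunc ℂ) : List V → RatFunc ℂ
  | [] => 0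
  | [_] => 0
  | [a, b] => w a b
  | a :: b :: c :: rest => w a b * branchProd w (b :: c :: rest) / (RatFunc.X - w b b)

/-- The isospectral reduction `R_S(G)`: the graph on vertex set `S` whose weight
from `u` to `v` is the sum of the branch products of all branches from `u` to
`v` with respect to `S`. -/
def WDigraph.reduce (G : WDigraph V) (S : Finset V) : WDigraph V where
  verts := S
  w := fun u v => ∑ᶠ β ∈ {β : List V | IsBranch G S u v β}, branchProd G.w β

/-- The set `N(G;S)`: all `z ∈ ℂ` such that for some vertex `v` of `G` off `S`,
either `z = ω(e_vv)(z)` or `ω(e_vv)` is undefined at `z`. -/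
def NSet (G : WDigraph V) (S : Finset V) : Set ℂ :=
  {z | ∃ v ∈ G.verts, v ∉ S ∧
    ((RatFunc.X - G.w v v).num.eval z = 0 ∨ (G.w v v).denom.eval z = 0)}

/-- Isomorphism of weighted digraphs: a vertex bijection carrying edges to edges
and preserving weights. -/
def WDigraph.Isom {V₁ : Type*} [Fintype V₁] [DecidableEq V₁]
    {V₂ : Type*} [Fintype V₂] [DecidableEq V₂]
    (G : WDigraph V₁) (H : WDigraph V₂) : Prop :=
  ∃ ρ : G.verts ≃ H.verts, ∀ u v : G.verts, H.w (ρ u).1 (ρ v).1 = G.w u.1 v.1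


/-- `R(G; S₁,…,S_m)`: the result of sequentially reducing `G` over `S₁,…,S_m`. -/
def reduceSeq (G : WDigraph V) : List (Finset V) → WDigraph V
  | [] => G
  | S :: rest => reduceSeq (G.reduce S) rest

/-- `S₁,…,S_m` induces a sequence of reductions on `G`: each `S_{i+1}` is a
structural set of the `i`-th reduction. -/
def InducesSeq (G : WDigraph V) : List (Finset V) → Prop
  | [] => True
  | S :: rest => IsStructuralSet G S ∧ InducesSeq (G.reduce S) rest

/-- The set `N(G; S₁,…,S_m)`, accumulated along the sequence of reductions. -/
def NSeq (G : WDigraph V) : List (Finset V) → Set ℂ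
  | [] => ∅
  | S :: rest => NSet G S ∪ NSeq (G.reduce S) rest

/-! ### Auxiliary development for the proof of `reduceSeq_comm` -/

namespace ReduceCommAux

variable {V : Type*} [Fintype V] [DecidableEq V]

/-- A "half branch": like a branch, but with no requirement on the first vertex. -/
def IsHB (G : WDigraph V) (S : Finset V) (v s : V) (β : List V) : Prop :=
  s ∈ S ∧ ∃ int : List V, β = v :: (int ++ [s]) ∧
      (∀ x ∈ int, x ∈ G.verts ∧ x ∉ S) ∧
      (v :: int).Nodup ∧ s ∉ int ∧
      List.Chain' (fun a b => G.w a b ≠ 0) β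

lemma isBranch_iff (G : WDigraph V) (S : Finset V) (u v : V) (β : List V) :
    IsBranch G S u v β ↔ u ∈ S ∧ IsHB G S u v β := by
  constructor
  · rintro ⟨h1, h2, h3⟩; exact ⟨h1, h2, h3⟩
  · rintro ⟨h1, h2, h3⟩; exact ⟨h1, h2, h3⟩

lemma hb_finite (G : WDigraph V) (S : Finset V) (v s : V) :
    {β : List V | IsHB G S v s β}.Finite := by
  apply (List.finite_length_le V (Fintype.card V + 2)).subset
  rintro β ⟨hs, int, rfl, hmem, hnd, hns, hch⟩
  have h1 : int.Nodup := hnd.of_cons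
  have h2 := h1.length_le_card
  show (v :: (int ++ [s])).length ≤ _
  simp only [List.length_cons, List.length_append, List.length_nil]
  omega

/-- The sum of branch products over all half branches from `v` to `s`. -/
def hbSum (G : WDigraph V) (S : Finset V) (v s : V) : RatFunc ℂ :=
  ∑ᶠ β ∈ {β : List V | IsHB G S v s β}, branchProd G.w β

lemma hbSum_eq_sum (G : WDigraph V) (S : Finset V) (v s : V) :
    hbSum G S v s = ∑ β ∈ (hb_finite G S v s).toFinset, branchProd G.w β :=
  finsum_mem_eq_finite_toFinset_sum _ (hb_finite G S v s)

lemma reduce_w (G : WDigraph V) (S : Finset V) (u v : V) :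
    (G.reduce S).w u v = if u ∈ S then hbSum G S u v else 0 := by
  show (∑ᶠ β ∈ {β : List V | IsBranch G S u v β}, branchProd G.w β) = _
  split_ifs with h
  · unfold hbSum
    congr 1
    ext β
    simp only [Set.mem_setOf_eq, isBranch_iff, h, true_and]
  · have hempty : {β : List V | IsBranch G S u v β} = ∅ := by
      ext β
      simp only [Set.mem_setOf_eq, Set.mem_empty_iff_false, iff_false]
      intro hβ
      exact h hβ.1
    rw [hempty, finsum_mem_empty]

lemma reduce_verts (G : WDigraph V) (S : Finset V) : (G.reduce S).verts = S := rfl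

lemma reduce_wf (G : WDigraph V) (S : Finset V) : (G.reduce S).Wf := by
  intro u v h
  by_contra hc
  apply h
  show (∑ᶠ β ∈ {β : List V | IsBranch G S u v β}, branchProd G.w β) = 0
  have hempty : {β : List V | IsBranch G S u v β} = ∅ := by
    ext β
    simp only [Set.mem_setOf_eq, Set.mem_empty_iff_false, iff_false]
    intro hβ
    exact hc ⟨hβ.1, hβ.2.1⟩
  rw [hempty, finsum_mem_empty]

lemma transGen_of_path (G : WDigraph V) (S : Finset V) :
    ∀ (l : List V) (a : V), (∀ x ∈ a :: l, x ∈ G.verts ∧ x ∉ S) → (a :: l).Nodup →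
      List.Chain (fun p q => G.w p q ≠ 0) a l → ∀ b ∈ l,
      Relation.TransGen
        (fun p q => p ∈ G.verts ∧ q ∈ G.verts ∧ p ∉ S ∧ q ∉ S ∧ p ≠ q ∧ G.w p q ≠ 0) a b := by
  intro l
  induction l with
  | nil => intro a _ _ _ b hb; simp at hb
  | cons c l ih =>
    intro a hmem hnd hch b hb
    have hac : G.w a c ≠ 0 := (List.chain_cons.mp hch).1
    have haC : a ≠ c := by
      have := hnd.of_cons -- not what we want
      intro h
      subst h
      exact (List.nodup_cons.mp hnd).1 (by simp)
    have hRel : a ∈ G.verts ∧ c ∈ G.verts ∧ a ∉ S ∧ c ∉ S ∧ a ≠ c ∧ G.w a c ≠ 0 :=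
      ⟨(hmem a (by simp)).1, (hmem c (by simp)).1, (hmem a (by simp)).2,
        (hmem c (by simp)).2, haC, hac⟩
    rcases List.mem_cons.mp hb with rfl | hb'
    · exact Relation.TransGen.single hRel
    · exact Relation.TransGen.head hRel
        (ih c (fun x hx => hmem x (List.mem_cons_of_mem _ hx)) hnd.of_cons
          (List.chain_cons.mp hch).2 b hb')

lemma branchProd_cons (w : V → V → RatFunc ℂ) (v v' s : V) (l : List V) :
    branchProd w (v :: v' :: (l ++ [s])) =
      w v v' * branchProd w (v' :: (l ++ [s])) / (RatFunc.X - w v' v') := by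
  cases l <;> rfl

lemma hbSum_rec (G : WDigraph V) (S : Finset V) (hS : IsStructuralSet G S)
    (v s : V) (hs : s ∈ S) :
    hbSum G S v s = G.w v s +
      ∑ v' ∈ (G.verts \ S).erase v,
        G.w v v' * hbSum G S v' s / (RatFunc.X - G.w v' v') := by
  classical
  obtain ⟨-, -, hcyc, -⟩ := hS
  have hterm : ∀ v' ∈ (G.verts \ S).erase v,
      G.w v v' * hbSum G S v' s / (RatFunc.X - G.w v' v')
        = ∑ β' ∈ (hb_finite G S v' s).toFinset.filter
            (fun β' => IsHB G S v s (v :: β')), branchProd G.w (v :: β') := by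
    intro v' hv'
    obtain ⟨hne, hv'mem⟩ := Finset.mem_erase.mp hv'
    obtain ⟨hv'verts, hv'S⟩ := Finset.mem_sdiff.mp hv'mem
    have hcongr : ∀ β' ∈ (hb_finite G S v' s).toFinset,
        G.w v v' * branchProd G.w β' / (RatFunc.X - G.w v' v')
          = branchProd G.w (v :: β') := by
      intro β' hβ'
      rw [Set.Finite.mem_toFinset] at hβ'
      obtain ⟨hs', l, rfl, -, -, -, -⟩ := hβ'
      exact (branchProd_cons G.w v v' s l).symm
    have hfz : ∀ β' ∈ (hb_finite G S v' s).toFinset,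
        branchProd G.w (v :: β') ≠ 0 → IsHB G S v s (v :: β') := by
      intro β' hβ' hne0
      rw [Set.Finite.mem_toFinset] at hβ'
      obtain ⟨hs', l, rfl, hintm, hnd, hsl, hch⟩ := hβ'
      have hw : G.w v v' ≠ 0 := by
        intro h0
        exact hne0 (by rw [branchProd_cons, h0, zero_mul, zero_div])
      have hvnl : v ∉ l := by
        intro hvl
        have hvm := hintm v hvl
        refine absurd ?_ (hcyc v)
        refine Relation.TransGen.head
          ⟨hvm.1, hv'verts, hvm.2, hv'S, fun h => hne h.symm, hw⟩ ?_
        have hch' : List.Chain (fun a b => G.w a b ≠ 0) v' l := by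
          have hpre : List.Chain' (fun a b => G.w a b ≠ 0) (v' :: l) :=
            hch.prefix ⟨[s], by simp⟩
          exact hpre
        exact transGen_of_path G S l v'
          (fun x hx => by
            rcases List.mem_cons.mp hx with rfl | hx'
            · exact ⟨hv'verts, hv'S⟩
            · exact hintm x hx')
          hnd hch' v hvl
      refine ⟨hs, v' :: l, by simp, ?_, ?_, ?_, ?_⟩
      · intro x hx
        rcases List.mem_cons.mp hx with rfl | hx'
        · exact ⟨hv'verts, hv'S⟩
        · exact hintm x hx'
      · rw [List.nodup_cons]
        refine ⟨?_, hnd⟩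
        rw [List.mem_cons]
        rintro (h | h)
        · exact hne h.symm
        · exact hvnl h
      · rw [List.mem_cons]
        rintro (h | h)
        · subst h; exact hv'S hs
        · exact hsl h
      · exact List.isChain_cons_cons.mpr ⟨hw, hch⟩
    rw [hbSum_eq_sum, Finset.mul_sum, Finset.sum_div, Finset.sum_filter_of_ne hfz]
    exact Finset.sum_congr rfl hcongr
  rw [hbSum_eq_sum,
    ← Finset.sum_filter_add_sum_filter_not ((hb_finite G S v s).toFinset)
      (fun β => β = [v, s]) (branchProd G.w)]
  congr 1
  · -- the length-two part sums to `G.w v s`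
    rw [Finset.sum_filter, Finset.sum_ite_eq' ((hb_finite G S v s).toFinset) [v, s]
      (branchProd G.w)]
    by_cases hvs : G.w v s = 0
    · rw [if_neg, hvs]
      intro hmem
      rw [Set.Finite.mem_toFinset] at hmem
      obtain ⟨-, l, heq, -, -, -, hch⟩ := hmem
      have hl : l = [] := by
        have h := congrArg List.length heq
        simpa using h
      subst hl
      exact (List.isChain_cons_cons.mp hch).1 hvs
    · rw [if_pos]
      · rfl
      · rw [Set.Finite.mem_toFinset]
        exact ⟨hs, [], rfl, by simp, by simp, by simp,
          List.isChain_cons_cons.mpr ⟨hvs, List.isChain_singleton s⟩⟩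
  · -- the longer branches
    rw [Finset.sum_congr rfl hterm, Finset.sum_sigma']
    refine Finset.sum_nbij' (fun β => (⟨β.tail.headD v, β.tail⟩ : Σ _ : V, List V))
      (fun p => v :: p.2) ?_ ?_ ?_ ?_ ?_
    · -- membership forward
      intro β hβ
      obtain ⟨hβF, hβne⟩ := Finset.mem_filter.mp hβ
      rw [Set.Finite.mem_toFinset] at hβF
      obtain ⟨hs', int, rfl, hintm, hnd, hsl, hch⟩ := hβF
      match int, hnd, hsl, hintm, hch, hβne with
      | [], _, _, _, _, hβne => exact absurd rfl hβne
      | v' :: l, hnd, hsl, hintm, hch, hβne =>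
        rw [Finset.mem_sigma]
        constructor
        · simp only [List.cons_append, List.tail_cons, List.headD_cons]
          refine Finset.mem_erase.mpr ⟨?_, Finset.mem_sdiff.mpr ⟨(hintm v' (by simp)).1,
            (hintm v' (by simp)).2⟩⟩
          intro h
          exact (List.nodup_cons.mp hnd).1 (by rw [h]; simp)
        · simp only [List.cons_append, List.tail_cons, List.headD_cons]
          rw [Finset.mem_filter, Set.Finite.mem_toFinset]
          refine ⟨⟨hs, l, rfl, fun x hx => hintm x (by simp [hx]), hnd.of_cons,
            fun h => hsl (by simp [h]), hch.tail⟩, ?_⟩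
          exact ⟨hs, v' :: l, by simp, hintm, hnd, hsl, hch⟩
    · -- membership backward
      intro p hp
      rw [Finset.mem_sigma] at hp
      obtain ⟨hp1, hp2⟩ := hp
      rw [Finset.mem_filter, Set.Finite.mem_toFinset] at hp2
      obtain ⟨hhb, hQ⟩ := hp2
      rw [Finset.mem_filter, Set.Finite.mem_toFinset]
      refine ⟨hQ, ?_⟩
      obtain ⟨-, l, hshape, -, -, -, -⟩ := hhb
      intro hcontra
      have hcontra' : v :: p.2 = [v, s] := hcontra
      rw [hshape] at hcontra'
      have := congrArg List.length hcontra'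
      simp at this
    · -- left inverse
      intro β hβ
      obtain ⟨hβF, hβne⟩ := Finset.mem_filter.mp hβ
      rw [Set.Finite.mem_toFinset] at hβF
      obtain ⟨hs', int, rfl, hintm, hnd, hsl, hch⟩ := hβF
      match int, hβne with
      | [], hβne => exact absurd rfl hβne
      | v' :: l, _ => simp
    · -- right inverse
      rintro ⟨v', β'⟩ hp
      rw [Finset.mem_sigma] at hp
      obtain ⟨hp1, hp2⟩ := hp
      dsimp only at hp1 hp2 ⊢
      rw [Finset.mem_filter, Set.Finite.mem_toFinset] at hp2
      obtain ⟨⟨-, l, hshape, -, -, -, -⟩, -⟩ := hp2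
      subst hshape
      rfl
    · -- values agree
      intro β hβ
      obtain ⟨hβF, hβne⟩ := Finset.mem_filter.mp hβ
      rw [Set.Finite.mem_toFinset] at hβF
      obtain ⟨hs', int, rfl, hintm, hnd, hsl, hch⟩ := hβF
      match int, hβne with
      | [], hβne => exact absurd rfl hβne
      | v' :: l, _ => simp

lemma key_sum (G : WDigraph V) (S : Finset V) (hS : IsStructuralSet G S)
    (x : V → RatFunc ℂ) (u : V) :
    ∑ s ∈ S, hbSum G S u s * x s
      = ∑ s ∈ S, G.w u s * x s +
        ∑ v' ∈ (G.verts \ S).erase u,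
          G.w u v' * ((∑ s ∈ S, hbSum G S v' s * x s) / (RatFunc.X - G.w v' v')) := by
  have h1 : ∀ s ∈ S, hbSum G S u s * x s
      = G.w u s * x s + ∑ v' ∈ (G.verts \ S).erase u,
          G.w u v' * hbSum G S v' s / (RatFunc.X - G.w v' v') * x s := by
    intro s hs
    rw [hbSum_rec G S hS u s hs, add_mul, Finset.sum_mul]
  rw [Finset.sum_congr rfl h1, Finset.sum_add_distrib]
  congr 1
  rw [Finset.sum_comm]
  refine Finset.sum_congr rfl fun v' _ => ?_
  rw [div_eq_mul_inv, Finset.sum_mul, Finset.mul_sum]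
  refine Finset.sum_congr rfl fun s _ => ?_
  ring

/-- The linear characterization of (sequences of) isospectral reductions. -/
def LinRep (G H : WDigraph V) : Prop :=
  H.verts ⊆ G.verts ∧ (∀ u v, H.w u v ≠ 0 → u ∈ H.verts ∧ v ∈ H.verts) ∧
    ∀ x : V → RatFunc ℂ, (∀ v, v ∉ H.verts → x v = 0) →
      ∃ z : V → RatFunc ℂ,
        (∀ v, v ∉ G.verts ∨ v ∈ H.verts → z v = 0) ∧
        (∀ u ∈ G.verts, u ∉ H.verts →
          ∑ v, G.w u v * (x v + z v) = RatFunc.X * z u) ∧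
        (∀ u ∈ H.verts, ∑ v, H.w u v * x v = ∑ v, G.w u v * (x v + z v))

lemma linRep_self (G : WDigraph V) (hG : G.Wf) : LinRep G G := by
  refine ⟨subset_rfl, fun u v h => hG u v h, fun x hx => ⟨0, fun v _ => rfl, ?_, ?_⟩⟩
  · intro u hu hu'; exact absurd hu hu'
  · intro u hu; simp

lemma linRep_reduce (G : WDigraph V) (S : Finset V) (hS : IsStructuralSet G S) :
    LinRep G (G.reduce S) := by
  obtain ⟨hne, hsub, hcyc, hloop⟩ := hS
  refine ⟨hsub, fun u v h => reduce_wf G S u v h, ?_⟩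
  intro x hx
  set z : V → RatFunc ℂ := fun u =>
    if u ∈ G.verts \ S then (∑ s ∈ S, hbSum G S u s * x s) / (RatFunc.X - G.w u u)
    else 0 with hz
  have hz0 : ∀ v, v ∉ G.verts \ S → z v = 0 := by
    intro v hv; rw [hz]; simp only; rw [if_neg hv]
  have hzval : ∀ v ∈ G.verts \ S,
      z v = (∑ s ∈ S, hbSum G S v s * x s) / (RatFunc.X - G.w v v) := by
    intro v hv; rw [hz]; simp only; rw [if_pos hv]
  have hsplit : ∀ u : V, ∑ v, G.w u v * (x v + z v)
      = ∑ s ∈ S, G.w u s * x s + ∑ v' ∈ G.verts \ S, G.w u v' * z v' := by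
    intro u
    have e0 : ∑ v, G.w u v * (x v + z v) = ∑ v, (G.w u v * x v + G.w u v * z v) :=
      Fintype.sum_congr _ _ (fun v => mul_add _ _ _)
    have e1 : ∑ s ∈ S, G.w u s * x s = ∑ v, G.w u v * x v :=
      Finset.sum_subset (Finset.subset_univ S) (fun v _ hv => by rw [hx v hv, mul_zero])
    have e2 : ∑ v' ∈ G.verts \ S, G.w u v' * z v' = ∑ v, G.w u v * z v :=
      Finset.sum_subset (Finset.subset_univ _) (fun v _ hv => by rw [hz0 v hv, mul_zero])
    rw [e0, Finset.sum_add_distrib, e1, e2]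
  refine ⟨z, fun v hv => ?_, ?_, ?_⟩
  · apply hz0
    intro hmem
    rw [Finset.mem_sdiff] at hmem
    rcases hv with h | h
    · exact h hmem.1
    · exact hmem.2 h
  · intro u hu huS
    have huMem : u ∈ G.verts \ S := Finset.mem_sdiff.mpr ⟨hu, huS⟩
    have hc : RatFunc.X - G.w u u ≠ 0 := sub_ne_zero_of_ne (Ne.symm (hloop u hu huS))
    rw [hsplit u, ← Finset.add_sum_erase _ _ huMem]
    have key := key_sum G S ⟨hne, hsub, hcyc, hloop⟩ x u
    have hzv : ∀ v' ∈ (G.verts \ S).erase u,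
        G.w u v' * ((∑ s ∈ S, hbSum G S v' s * x s) / (RatFunc.X - G.w v' v'))
          = G.w u v' * z v' := by
      intro v' hv'
      rw [hzval v' (Finset.mem_of_mem_erase hv')]
    rw [Finset.sum_congr rfl hzv] at key
    have hmain : (RatFunc.X - G.w u u) * z u = ∑ s ∈ S, hbSum G S u s * x s := by
      rw [hzval u huMem, mul_comm]
      exact div_mul_cancel₀ _ hc
    linear_combination - key - hmain
  · intro u hu
    have hu' : u ∈ S := hu
    have hL : ∀ v : V, (G.reduce S).w u v * x v = hbSum G S u v * x v := by
      intro v; rw [reduce_w, if_pos hu']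
    rw [Fintype.sum_congr _ _ hL]
    have hrestrict : ∑ v, hbSum G S u v * x v = ∑ s ∈ S, hbSum G S u s * x s :=
      (Finset.sum_subset (Finset.subset_univ S)
        (fun v _ hv => by rw [hx v hv, mul_zero])).symm
    rw [hrestrict, hsplit u]
    have key := key_sum G S ⟨hne, hsub, hcyc, hloop⟩ x u
    have huNot : u ∉ G.verts \ S := by
      intro h; exact (Finset.mem_sdiff.mp h).2 hu'
    rw [Finset.erase_eq_of_notMem huNot] at key
    have hzv : ∀ v' ∈ G.verts \ S,
        G.w u v' * ((∑ s ∈ S, hbSum G S v' s * x s) / (RatFunc.X - G.w v' v'))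
          = G.w u v' * z v' := by
      intro v' hv'
      rw [hzval v' hv']
    rw [Finset.sum_congr rfl hzv] at key
    exact key

lemma linRep_comp {G H K : WDigraph V} (h1 : LinRep G H) (h2 : LinRep H K) :
    LinRep G K := by
  obtain ⟨hsub1, hwf1, hmain1⟩ := h1
  obtain ⟨hsub2, hwf2, hmain2⟩ := h2
  refine ⟨hsub2.trans hsub1, hwf2, ?_⟩
  intro x hx
  obtain ⟨w, hw0, hw1, hw2⟩ := hmain2 x hx
  have hxw : ∀ v, v ∉ H.verts → x v + w v = 0 := by
    intro v hv
    rw [hx v (fun h => hv (hsub2 h)), hw0 v (Or.inl hv), add_zero]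
  obtain ⟨z, hz0, hz1, hz2⟩ := hmain1 (fun v => x v + w v) hxw
  refine ⟨fun v => w v + z v, ?_, ?_, ?_⟩
  · intro v hv
    show w v + z v = 0
    rcases hv with hv | hv
    · rw [hw0 v (Or.inl (fun h => hv (hsub1 h))), hz0 v (Or.inl hv), add_zero]
    · rw [hw0 v (Or.inr hv), hz0 v (Or.inr (hsub2 hv)), add_zero]
  · intro u hu huK
    by_cases huH : u ∈ H.verts
    · have e1 := hz2 u huH
      have e2 := hw1 u huH huK
      have hzu : z u = 0 := hz0 u (Or.inr huH)
      calc ∑ v, G.w u v * (x v + (w v + z v))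
          = ∑ v, G.w u v * ((x v + w v) + z v) :=
            Fintype.sum_congr _ _ fun v => by ring
        _ = ∑ v, H.w u v * (x v + w v) := e1.symm
        _ = RatFunc.X * w u := e2
        _ = RatFunc.X * (w u + z u) := by rw [hzu, add_zero]
    · have e1 := hz1 u hu huH
      have hwu : w u = 0 := hw0 u (Or.inl huH)
      calc ∑ v, G.w u v * (x v + (w v + z v))
          = ∑ v, G.w u v * ((x v + w v) + z v) :=
            Fintype.sum_congr _ _ fun v => by ring
        _ = RatFunc.X * z u := e1
        _ = RatFunc.X * (w u + z u) := by rw [hwu, zero_add]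
  · intro u hu
    calc ∑ v, K.w u v * x v = ∑ v, H.w u v * (x v + w v) := hw2 u hu
      _ = ∑ v, G.w u v * ((x v + w v) + z v) := hz2 u (hsub2 hu)
      _ = ∑ v, G.w u v * (x v + (w v + z v)) :=
          Fintype.sum_congr _ _ fun v => by ring

lemma linRep_reduceSeq : ∀ (L : List (Finset V)) (G : WDigraph V), G.Wf → InducesSeq G L →
    LinRep G (reduceSeq G L)
  | [], G, hG, _ => linRep_self G hG
  | S :: L', G, hG, h => by
    obtain ⟨hS, hL'⟩ := h
    exact linRep_comp (linRep_reduce G S hS)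
      (linRep_reduceSeq L' (G.reduce S) (reduce_wf G S) hL')

lemma reduceSeq_verts : ∀ (L : List (Finset V)) (hL : L ≠ []) (G : WDigraph V),
    (reduceSeq G L).verts = L.getLast hL
  | [S], _, G => rfl
  | S :: T :: L', _, G => by
    show (reduceSeq (G.reduce S) (T :: L')).verts = _
    rw [reduceSeq_verts (T :: L') (by simp) (G.reduce S)]
    simp [List.getLast]

lemma pow_ofAdd_one (n : ℕ) :
    ((Multiplicative.ofAdd (1 : ℤ) : Multiplicative ℤ) : WithZero (Multiplicative ℤ)) ^ n
      = ((Multiplicative.ofAdd (n : ℤ) : Multiplicative ℤ) : WithZero (Multiplicative ℤ)) := by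
  induction n with
  | zero => simp
  | succ n ih =>
    rw [pow_succ, ih, ← WithZero.coe_mul, ← ofAdd_add]
    norm_num

lemma det_ne_zero (G : WDigraph V) (hpi : G.PiNonpos) (T : Finset V) :
    (Matrix.of fun i j : ↥(G.verts \ T) =>
      G.w i.1 j.1 - if i = j then (RatFunc.X : RatFunc ℂ) else 0).det ≠ 0 := by
  classical
  set ι := ↥(G.verts \ T) with hι
  set M : Matrix ι ι (RatFunc ℂ) := Matrix.of fun i j : ι =>
      G.w i.1 j.1 - if i = j then (RatFunc.X : RatFunc ℂ) else 0 with hM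
  show M.det ≠ 0
  cases isEmpty_or_nonempty ι with
  | inl hempty => rw [Matrix.det_isEmpty]; exact one_ne_zero
  | inr hne =>
    set v := RatFunc.inftyValuation ℂ with hv
    have hvle : ∀ a b : V,
        v (G.w a b) ≤ ((Multiplicative.ofAdd (0 : ℤ) : Multiplicative ℤ) :
          WithZero (Multiplicative ℤ)) := by
      intro a b
      by_cases h0 : G.w a b = 0
      · rw [h0, map_zero]; exact zero_le'
      · rw [hv, RatFunc.inftyValuation_apply,
          RatFunc.inftyValuation_of_nonzero (F := ℂ) h0]
        show ((Multiplicative.ofAdd (G.w a b).intDegree : Multiplicative ℤ) :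
          WithZero (Multiplicative ℤ)) ≤ _
        rw [WithZero.coe_le_coe, Multiplicative.ofAdd_le]
        have h1 := Polynomial.natDegree_le_natDegree (hpi a b)
        unfold RatFunc.intDegree
        omega
    have hone : ((Multiplicative.ofAdd (0 : ℤ) : Multiplicative ℤ) :
        WithZero (Multiplicative ℤ)) = 1 := by norm_num
    have hX : v RatFunc.X = ((Multiplicative.ofAdd (1 : ℤ) : Multiplicative ℤ) :
        WithZero (Multiplicative ℤ)) := by
      rw [hv, RatFunc.inftyValuation_apply]
      exact RatFunc.inftyValuation.X ℂ
    have hlt01 : ((Multiplicative.ofAdd (0 : ℤ) : Multiplicative ℤ) :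
        WithZero (Multiplicative ℤ)) < ((Multiplicative.ofAdd (1 : ℤ) : Multiplicative ℤ) :
        WithZero (Multiplicative ℤ)) := by
      rw [WithZero.coe_lt_coe, Multiplicative.ofAdd_lt]; norm_num
    have hdiag : ∀ a : V, v (G.w a a - RatFunc.X)
        = ((Multiplicative.ofAdd (1 : ℤ) : Multiplicative ℤ) :
          WithZero (Multiplicative ℤ)) := by
      intro a
      have hlt : v (G.w a a) < v RatFunc.X := by
        rw [hX]
        exact lt_of_le_of_lt (hvle a a) hlt01
      rw [Valuation.map_sub_eq_of_lt_right v hlt, hX]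
    set e : WithZero (Multiplicative ℤ) :=
      ((Multiplicative.ofAdd (1 : ℤ) : Multiplicative ℤ) : WithZero (Multiplicative ℤ)) with he
    set k := Fintype.card ι with hk
    have hkpos : 0 < k := Fintype.card_pos
    have hterm : ∀ σ : Equiv.Perm ι, σ ≠ 1 →
        v (Equiv.Perm.sign σ • ∏ i, M (σ i) i) ≤ e ^ (k - 2) := by
      intro σ hσ
      have hsmul : v (Equiv.Perm.sign σ • ∏ i, M (σ i) i) = v (∏ i, M (σ i) i) := by
        rcases Int.units_eq_one_or (Equiv.Perm.sign σ) with h | h <;> rw [h]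
        · rw [one_smul]
        · have hns : (-1 : ℤˣ) • (∏ i, M (σ i) i) = -(∏ i, M (σ i) i) := by
            rw [Units.smul_def]
            norm_num
          rw [hns, Valuation.map_neg]
      rw [hsmul, map_prod]
      obtain ⟨i, hi⟩ : ∃ i, σ i ≠ i := by
        by_contra h
        push_neg at h
        exact hσ (Equiv.ext h)
      have hji : σ i ≠ i := hi
      have hjm : σ i ∈ Finset.univ.erase i := Finset.mem_erase.mpr ⟨hji, Finset.mem_univ _⟩
      have hσj : σ (σ i) ≠ σ i := by
        intro h
        exact hi (σ.injective h)
      have hfac_le_one : ∀ m : ι, σ m ≠ m → v (M (σ m) m) ≤ 1 := by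
        intro m hm
        have hM1 : M (σ m) m = G.w (σ m).1 m.1 := by
          rw [hM, Matrix.of_apply, if_neg hm, sub_zero]
        rw [hM1, ← hone]
        exact hvle _ _
      have hfac_le_e : ∀ m : ι, v (M (σ m) m) ≤ e := by
        intro m
        by_cases hm : σ m = m
        · have hM1 : M (σ m) m = G.w m.1 m.1 - RatFunc.X := by
            rw [hM, Matrix.of_apply, hm, if_pos rfl]
          rw [hM1, hdiag]
        · refine le_trans (hfac_le_one m hm) (le_of_lt ?_)
          rw [← hone]
          exact hlt01
      have hrest : ∏ m ∈ (Finset.univ.erase i).erase (σ i), v (M (σ m) m) ≤ e ^ (k - 2) := by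
        have h1 : ∏ m ∈ (Finset.univ.erase i).erase (σ i), v (M (σ m) m)
            ≤ ∏ _m ∈ (Finset.univ.erase i).erase (σ i), e :=
          Finset.prod_le_prod' (fun m _ => hfac_le_e m)
        rw [Finset.prod_const] at h1
        have hcard : ((Finset.univ.erase i).erase (σ i)).card = k - 2 := by
          rw [Finset.card_erase_of_mem hjm, Finset.card_erase_of_mem (Finset.mem_univ i),
            Finset.card_univ]
          omega
        rwa [hcard] at h1
      rw [← Finset.mul_prod_erase Finset.univ _ (Finset.mem_univ i),
        ← Finset.mul_prod_erase _ _ hjm]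
      calc v (M (σ i) i) * (v (M (σ (σ i)) (σ i)) *
              ∏ m ∈ (Finset.univ.erase i).erase (σ i), v (M (σ m) m))
          ≤ 1 * (1 * e ^ (k - 2)) :=
            mul_le_mul' (hfac_le_one i hi) (mul_le_mul' (hfac_le_one (σ i) hσj) hrest)
        _ = e ^ (k - 2) := by rw [one_mul, one_mul]
    -- the diagonal term
    have hDval : v (∏ i : ι, M i i) = e ^ k := by
      rw [map_prod]
      have hDi : ∀ i : ι, v (M i i) = e := by
        intro i
        have hM1 : M i i = G.w i.1 i.1 - RatFunc.X := by
          rw [hM, Matrix.of_apply, if_pos rfl]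
        rw [hM1]
        exact hdiag i.1
      rw [Finset.prod_congr rfl (fun i _ => hDi i), Finset.prod_const, Finset.card_univ]
    have hlt_ek : e ^ (k - 2) < e ^ k := by
      rw [he, pow_ofAdd_one, pow_ofAdd_one, WithZero.coe_lt_coe, Multiplicative.ofAdd_lt]
      have : k - 2 < k := by omega
      exact_mod_cast this
    -- assemble
    rw [Matrix.det_apply,
      ← Finset.add_sum_erase Finset.univ _ (Finset.mem_univ (1 : Equiv.Perm ι))]
    have hfirst : (Equiv.Perm.sign (1 : Equiv.Perm ι)) • ∏ i : ι, M ((1 : Equiv.Perm ι) i) i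
        = ∏ i : ι, M i i := by
      rw [Equiv.Perm.sign_one, one_smul]
      exact Finset.prod_congr rfl (fun i _ => by rw [Equiv.Perm.one_apply])
    rw [hfirst]
    have hRbound : v (∑ σ ∈ Finset.univ.erase (1 : Equiv.Perm ι),
        Equiv.Perm.sign σ • ∏ i, M (σ i) i) ≤ e ^ (k - 2) :=
      Valuation.map_sum_le v (fun σ hσ => hterm σ (Finset.ne_of_mem_erase hσ))
    have hvdet : v (∏ i : ι, M i i + ∑ σ ∈ Finset.univ.erase (1 : Equiv.Perm ι),
        Equiv.Perm.sign σ • ∏ i, M (σ i) i) = e ^ k := by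
      rw [Valuation.map_add_eq_of_lt_left]
      · exact hDval
      · rw [hDval]
        exact lt_of_le_of_lt hRbound hlt_ek
    intro hcontra
    rw [hcontra, map_zero] at hvdet
    have : e ^ k ≠ 0 := by
      rw [he, pow_ofAdd_one]
      exact WithZero.coe_ne_zero
    exact this hvdet.symm

lemma vanish_of_lin (G : WDigraph V) (hpi : G.PiNonpos) (T : Finset V) (d : V → RatFunc ℂ)
    (hd : ∀ v, v ∉ G.verts \ T → d v = 0)
    (heq : ∀ u ∈ G.verts \ T, ∑ v, G.w u v * d v = RatFunc.X * d u) :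
    ∀ v, d v = 0 := by
  classical
  set M : Matrix ↥(G.verts \ T) ↥(G.verts \ T) (RatFunc ℂ) := Matrix.of fun i j =>
      G.w i.1 j.1 - if i = j then (RatFunc.X : RatFunc ℂ) else 0 with hM
  have hdet : M.det ≠ 0 := det_ne_zero G hpi T
  set d' : ↥(G.verts \ T) → RatFunc ℂ := fun i => d i.1 with hd'
  have hmul : M.mulVec d' = 0 := by
    funext i
    show ∑ j, M i j * d' j = 0
    have e0 : ∀ j : ↥(G.verts \ T), M i j * d' j
        = G.w i.1 j.1 * d j.1 - (if i = j then RatFunc.X * d j.1 else 0) := by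
      intro j
      rw [hM, Matrix.of_apply, hd']
      by_cases h : i = j
      · rw [if_pos h, if_pos h]; ring
      · rw [if_neg h, if_neg h]; ring
    rw [Fintype.sum_congr _ _ e0, Finset.sum_sub_distrib]
    have e1 : ∑ j : ↥(G.verts \ T), (if i = j then RatFunc.X * d j.1 else 0)
        = RatFunc.X * d i.1 := by
      simp
    have e2 : ∑ j : ↥(G.verts \ T), G.w i.1 j.1 * d j.1 = ∑ w, G.w i.1 w * d w := by
      rw [Finset.sum_coe_sort (G.verts \ T) (fun w => G.w i.1 w * d w)]
      exact Finset.sum_subset (Finset.subset_univ _)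
        (fun w _ hw => by rw [hd w hw, mul_zero])
    rw [e1, e2, heq i.1 i.2, sub_self]
  have hzero : d' = 0 := by
    have h1 := Matrix.nonsing_inv_mul M (isUnit_iff_ne_zero.mpr hdet)
    calc d' = (M⁻¹ * M).mulVec d' := by rw [h1, Matrix.one_mulVec]
      _ = M⁻¹.mulVec (M.mulVec d') := by rw [← Matrix.mulVec_mulVec]
      _ = 0 := by rw [hmul, Matrix.mulVec_zero]
  intro w
  by_cases hw : w ∈ G.verts \ T
  · exact congrFun hzero ⟨w, hw⟩
  · exact hd w hw

lemma WDigraph_ext {G H : WDigraph V} (h1 : G.verts = H.verts) (h2 : G.w = H.w) : G = H := by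
  cases G; cases H
  simp_all

end ReduceCommAux
/-- **Theorem (Commutativity of Reductions).** For `G ∈ 𝔾_π`, if `S₁,…,S_m` and
`T₁,…,T_n` both induce sequences of reductions on `G` with `S_m = T_n`, then
`R(G;S₁,…,S_m) = R(G;T₁,…,T_n)`. -/
theorem reduceSeq_comm
    (G : WDigraph V) (hG : G.Wf) (hpi : G.PiNonpos)
    (L₁ L₂ : List (Finset V)) (h₁ : L₁ ≠ []) (h₂ : L₂ ≠ [])
    (hL₁ : InducesSeq G L₁) (hL₂ : InducesSeq G L₂)
    (hlast : L₁.getLast h₁ = L₂.getLast h₂) :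
    reduceSeq G L₁ = reduceSeq G L₂ := by
  classical
  open ReduceCommAux in
  have hv₁ : (reduceSeq G L₁).verts = L₁.getLast h₁ := ReduceCommAux.reduceSeq_verts L₁ h₁ G
  have hv₂ : (reduceSeq G L₂).verts = L₁.getLast h₁ := by
    rw [ReduceCommAux.reduceSeq_verts L₂ h₂ G, ← hlast]
  have hr₁ := ReduceCommAux.linRep_reduceSeq L₁ G hG hL₁
  have hr₂ := ReduceCommAux.linRep_reduceSeq L₂ G hG hL₂
  set H₁ := reduceSeq G L₁ with hH₁
  set H₂ := reduceSeq G L₂ with hH₂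
  have hVerts : H₂.verts = H₁.verts := by rw [hv₁, hv₂]
  refine ReduceCommAux.WDigraph_ext hVerts.symm ?_
  funext u t
  by_cases htT : t ∈ H₁.verts
  swap
  · have ha : H₁.w u t = 0 := by
      by_contra h; exact htT (hr₁.2.1 u t h).2
    have hb : H₂.w u t = 0 := by
      by_contra h; exact htT (hVerts ▸ (hr₂.2.1 u t h).2)
    rw [ha, hb]
  by_cases huT : u ∈ H₁.verts
  swap
  · have ha : H₁.w u t = 0 := by
      by_contra h; exact huT (hr₁.2.1 u t h).1
    have hb : H₂.w u t = 0 := by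
      by_contra h; exact huT (hVerts ▸ (hr₂.2.1 u t h).1)
    rw [ha, hb]
  · set x : V → RatFunc ℂ := fun v => if v = t then 1 else 0 with hx
    have hxs₁ : ∀ v, v ∉ H₁.verts → x v = 0 := by
      intro v hv
      rw [hx]
      simp only
      rw [if_neg]
      rintro rfl
      exact hv htT
    have hxs₂ : ∀ v, v ∉ H₂.verts → x v = 0 := by
      intro v hv
      exact hxs₁ v (by rwa [← hVerts])
    obtain ⟨z₁, hz₁0, hz₁1, hz₁2⟩ := hr₁.2.2 x hxs₁
    obtain ⟨z₂, hz₂0, hz₂1, hz₂2⟩ := hr₂.2.2 x hxs₂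
    have hdz : ∀ v, z₁ v - z₂ v = 0 := by
      apply ReduceCommAux.vanish_of_lin G hpi H₁.verts (fun v => z₁ v - z₂ v)
      · intro v hv
        rw [Finset.mem_sdiff] at hv
        push_neg at hv
        by_cases hvG : v ∈ G.verts
        · have hvT : v ∈ H₁.verts := hv hvG
          rw [hz₁0 v (Or.inr hvT), hz₂0 v (Or.inr (hVerts ▸ hvT : v ∈ H₂.verts)), sub_self]
        · rw [hz₁0 v (Or.inl hvG), hz₂0 v (Or.inl hvG), sub_self]
      · intro u' hu'
        rw [Finset.mem_sdiff] at hu'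
        have e₁ := hz₁1 u' hu'.1 hu'.2
        have e₂ := hz₂1 u' hu'.1 (by rw [hVerts]; exact hu'.2)
        have esum : ∑ v, G.w u' v * (z₁ v - z₂ v)
            = ∑ v, G.w u' v * (x v + z₁ v) - ∑ v, G.w u' v * (x v + z₂ v) := by
          rw [← Finset.sum_sub_distrib]
          exact Fintype.sum_congr _ _ fun v => by ring
        rw [esum, e₁, e₂]
        ring
    have hzeq : ∀ v, z₁ v = z₂ v := fun v => sub_eq_zero.mp (hdz v)
    have e₁ := hz₁2 u huT
    have e₂ := hz₂2 u (by rwa [hVerts])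
    have e₃ : ∑ v, G.w u v * (x v + z₁ v) = ∑ v, G.w u v * (x v + z₂ v) :=
      Fintype.sum_congr _ _ fun v => by rw [hzeq v]
    have e₄ : ∑ v, H₁.w u v * x v = ∑ v, H₂.w u v * x v := by
      rw [e₁, e₃, ← e₂]
    have hextract : ∀ H : WDigraph V, ∑ v, H.w u v * x v = H.w u t := by
      intro H
      rw [hx]
      simp only [mul_ite, mul_one, mul_zero]
      rw [Finset.sum_ite_eq' Finset.univ t (fun v => H.w u v)]
      rw [if_pos (Finset.mem_univ t)]
    rw [← hextract H₁, ← hextract H₂]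
    exact e₄
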